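/- Assume in addition that L is injective. Let φ̄ ∈ X and suppose φ : [0,∞) → X is differentiable and satisfies the exact-data asymptotic-regularization flow φ'(t) = −L*(L φ(t) − L φ̄) for all t ≥ 0. Then φ(t) converges strongly to φ̄ in X as t → ∞. -/

import Mathlib

open Filter Topology

/-- If `L` is injective, any solution of the exact-data
asymptotic-regularization flow `φ' = −L*(L φ − L φ̄)` converges strongly to `φ̄`
as `t → ∞`. -/
theorem exact_flow_convergence
    {X Y : Type*}
    [NormedAddCommGroup X] [InnerProductSpace ℝ X] [CompleteSpace X]
    [NormedAddCommGroup Y] [InnerProductSpace ℝ Y] [CompleteSpace Y]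
    (L : X →L[ℝ] Y) (hL : Function.Injective L) (φbar : X) (φ : ℝ → X)
    (hflow : ∀ t : ℝ, 0 ≤ t →
      HasDerivAt φ (-(L.adjoint (L (φ t) - L φbar))) t) :
    Filter.Tendsto φ Filter.atTop (nhds φbar) := by
  set ψ : ℝ → X := fun t => φ t - φbar with hψdef
  -- derivative of ψ
  have hψ : ∀ t : ℝ, 0 ≤ t → HasDerivAt ψ (-(L.adjoint (L (ψ t)))) t := by
    intro t ht
    have := (hflow t ht).sub_const φbar
    simpa [hψdef, map_sub] using this
  set f : ℝ → ℝ := fun t => inner ℝ (ψ t) (ψ t) with hfdef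
  -- derivative of f
  have hf' : ∀ t : ℝ, 0 ≤ t →
      HasDerivAt f (-(2 * inner ℝ (L (ψ t)) (L (ψ t)) : ℝ)) t := by
    intro t ht
    have h := (hψ t ht).inner ℝ (hψ t ht)
    have key : (inner ℝ (ψ t) (-(L.adjoint (L (ψ t)))) : ℝ)
        + inner ℝ (-(L.adjoint (L (ψ t)))) (ψ t)
        = -(2 * inner ℝ (L (ψ t)) (L (ψ t)) : ℝ) := by
      rw [inner_neg_left, inner_neg_right, ContinuousLinearMap.adjoint_inner_left,
        ContinuousLinearMap.adjoint_inner_right, real_inner_comm]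
      ring
    rw [key] at h
    exact h
  -- f is antitone on [0, ∞)
  have hfanti : AntitoneOn f (Set.Ici (0:ℝ)) := by
    apply antitoneOn_of_deriv_nonpos (convex_Ici 0)
    · intro t ht
      exact (hf' t ht).continuousAt.continuousWithinAt
    · intro t ht
      rw [interior_Ici] at ht
      exact (hf' t ht.le).differentiableAt.differentiableWithinAt
    · intro t ht
      rw [interior_Ici] at ht
      rw [(hf' t ht.le).deriv]
      have : (0:ℝ) ≤ inner ℝ (L (ψ t)) (L (ψ t)) := real_inner_self_nonneg
      linarith
  -- globalize: F is antitone on all of ℝ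
  set F : ℝ → ℝ := fun t => f (max t 0) with hFdef
  have hFanti : Antitone F := by
    intro a b hab
    exact hfanti (Set.mem_Ici.2 (le_max_right a 0)) (Set.mem_Ici.2 (le_max_right b 0))
      (max_le_max hab le_rfl)
  have hFbdd : BddBelow (Set.range F) := by
    refine ⟨0, ?_⟩
    rintro x ⟨t, rfl⟩
    exact real_inner_self_nonneg
  set c : ℝ := ⨅ t, F t with hcdef
  have hFtends : Tendsto F atTop (𝓝 c) := tendsto_atTop_ciInf hFanti hFbdd
  have hFc : ∀ t : ℝ, c ≤ F t := fun t => ciInf_le hFbdd t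
  have hfF : ∀ t : ℝ, 0 ≤ t → f t = F t := by
    intro t ht; simp [hFdef, max_eq_left ht]
  -- key identity: ⟪ψ a, ψ b⟫ = f ((a+b)/2) for a, b ≥ 0
  have key : ∀ a b : ℝ, 0 ≤ a → 0 ≤ b → a ≤ b →
      (inner ℝ (ψ a) (ψ b) : ℝ) = f ((a + b) / 2) := by
    intro a b ha hb hab
    set m : ℝ := (a + b) / 2 with hmdef
    set r : ℝ := (b - a) / 2 with hrdef
    have hr : 0 ≤ r := by rw [hrdef]; linarith
    set g : ℝ → ℝ := fun s => inner ℝ (ψ (m + s)) (ψ (m - s)) with hgdef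
    -- g has zero derivative on (0, r) (indeed on a range covering Icc 0 r)
    have hg' : ∀ s : ℝ, 0 ≤ s → s ≤ r → HasDerivAt g 0 s := by
      intro s hs hsr
      have h1 : (0:ℝ) ≤ m + s := by rw [hmdef]; linarith
      have h2 : (0:ℝ) ≤ m - s := by
        rw [hmdef]; rw [hrdef] at hsr; linarith
      have hL1 : HasDerivAt (fun s : ℝ => ψ (m + s)) (-(L.adjoint (L (ψ (m + s))))) s :=
        (hψ (m + s) h1).comp_const_add m s
      have hL2 : HasDerivAt (fun s : ℝ => ψ (m - s)) (L.adjoint (L (ψ (m - s)))) s := by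
        have := (hψ (m - s) h2).comp_const_sub m s
        simpa using this
      have h := hL1.inner ℝ hL2
      have e : (inner ℝ (ψ (m + s)) (L.adjoint (L (ψ (m - s)))) : ℝ)
          + inner ℝ (-(L.adjoint (L (ψ (m + s))))) (ψ (m - s)) = 0 := by
        rw [inner_neg_left, ContinuousLinearMap.adjoint_inner_left,
          ContinuousLinearMap.adjoint_inner_right]
        ring
      rw [e] at h
      exact h
    -- hence g is constant on [0, r]
    have hgconst : g r = g 0 := by
      rcases eq_or_lt_of_le hr with h | h
      · rw [← h]
      · have hmono : MonotoneOn g (Set.Icc 0 r) := by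
          apply monotoneOn_of_deriv_nonneg (convex_Icc 0 r)
          · intro s hs
            exact (hg' s hs.1 hs.2).continuousAt.continuousWithinAt
          · intro s hs
            rw [interior_Icc] at hs
            exact (hg' s hs.1.le hs.2.le).differentiableAt.differentiableWithinAt
          · intro s hs
            rw [interior_Icc] at hs
            rw [(hg' s hs.1.le hs.2.le).deriv]
        have hanti : AntitoneOn g (Set.Icc 0 r) := by
          apply antitoneOn_of_deriv_nonpos (convex_Icc 0 r)
          · intro s hs
            exact (hg' s hs.1 hs.2).continuousAt.continuousWithinAt
          · intro s hs
            rw [interior_Icc] at hs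
            exact (hg' s hs.1.le hs.2.le).differentiableAt.differentiableWithinAt
          · intro s hs
            rw [interior_Icc] at hs
            rw [(hg' s hs.1.le hs.2.le).deriv]
        have h1 := hmono (Set.mem_Icc.2 ⟨le_rfl, hr⟩) (Set.mem_Icc.2 ⟨hr, le_rfl⟩) hr
        have h2 := hanti (Set.mem_Icc.2 ⟨le_rfl, hr⟩) (Set.mem_Icc.2 ⟨hr, le_rfl⟩) hr
        linarith
    have e1 : m + r = b := by rw [hmdef, hrdef]; ring
    have e2 : m - r = a := by rw [hmdef, hrdef]; ring
    have : (inner ℝ (ψ b) (ψ a) : ℝ) = inner ℝ (ψ m) (ψ m) := by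
      have := hgconst
      rw [hgdef] at this
      simpa [e1, e2] using this
    rw [real_inner_comm] at this
    simpa [hfdef, hmdef] using this
  have key' : ∀ a b : ℝ, 0 ≤ a → 0 ≤ b →
      (inner ℝ (ψ a) (ψ b) : ℝ) = f ((a + b) / 2) := by
    intro a b ha hb
    rcases le_total a b with h | h
    · exact key a b ha hb h
    · rw [real_inner_comm, key b a hb ha h, add_comm]
  -- ψ is Cauchy at ∞
  have hcauchy : CauchySeq ψ := by
    rw [Metric.cauchySeq_iff]
    intro ε hε
    have hε2 : (0:ℝ) < ε ^ 2 / 2 := by positivity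
    obtain ⟨N, hN⟩ := (Metric.tendsto_atTop.1 hFtends) (ε ^ 2 / 2) hε2
    refine ⟨max N 0, fun a ha b hb => ?_⟩
    have ha0 : (0:ℝ) ≤ a := le_trans (le_max_right N 0) ha
    have hb0 : (0:ℝ) ≤ b := le_trans (le_max_right N 0) hb
    have haN : N ≤ a := le_trans (le_max_left N 0) ha
    have hbN : N ≤ b := le_trans (le_max_left N 0) hb
    have hdsq : dist (ψ a) (ψ b) ^ 2 = f a + f b - 2 * f ((a + b) / 2) := by
      rw [dist_eq_norm, ← real_inner_self_eq_norm_sq, inner_sub_sub_self,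
        key' a b ha0 hb0]
      have : (inner ℝ (ψ b) (ψ a) : ℝ) = f ((a + b) / 2) := by
        rw [real_inner_comm]; exact key' a b ha0 hb0
      rw [this, hfdef]
      ring
    have hFa := hN a haN
    have hFb := hN b hbN
    rw [Real.dist_eq] at hFa hFb
    have hm0 : (0:ℝ) ≤ (a + b) / 2 := by linarith
    have hcm : c ≤ f ((a + b) / 2) := by rw [hfF _ hm0]; exact hFc _
    have hfa : f a < c + ε ^ 2 / 2 := by
      rw [hfF a ha0]
      have := abs_lt.1 hFa
      linarith [this.2]
    have hfb : f b < c + ε ^ 2 / 2 := by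
      rw [hfF b hb0]
      have := abs_lt.1 hFb
      linarith [this.2]
    have hsq : dist (ψ a) (ψ b) ^ 2 < ε ^ 2 := by
      rw [hdsq]; linarith
    nlinarith [dist_nonneg (x := ψ a) (y := ψ b), hε]
  obtain ⟨w, hw⟩ := cauchySeq_tendsto_of_complete hcauchy
  -- ⟪w, ψ b⟫ = c for b ≥ 0
  have hwb : ∀ b : ℝ, 0 ≤ b → (inner ℝ w (ψ b) : ℝ) = c := by
    intro b hb
    have h1 : Tendsto (fun a => (inner ℝ (ψ a) (ψ b) : ℝ)) atTop (𝓝 (inner ℝ w (ψ b))) :=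
      ((continuous_inner.comp (Continuous.prodMk continuous_id continuous_const)).tendsto w).comp hw
    have h2 : Tendsto (fun a : ℝ => f ((a + b) / 2)) atTop (𝓝 c) := by
      have hm : Tendsto (fun a : ℝ => (a + b) / 2) atTop atTop := by
        apply Tendsto.atTop_div_const (by norm_num)
        exact tendsto_atTop_add_const_right _ b tendsto_id
      have : Tendsto (fun a : ℝ => F ((a + b) / 2)) atTop (𝓝 c) := hFtends.comp hm
      apply this.congr'
      filter_upwards [hm.eventually_ge_atTop 0] with a ha
      rw [hfF _ ha]
    have heq : (fun a => (inner ℝ (ψ a) (ψ b) : ℝ)) =ᶠ[atTop]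
        fun a : ℝ => f ((a + b) / 2) := by
      filter_upwards [eventually_ge_atTop (0:ℝ)] with a ha
      exact key' a b ha hb
    exact tendsto_nhds_unique (h1.congr' heq) h2
  -- hence ⟪L w, L (ψ b)⟫ = 0 for b > 0
  have hLw : ∀ b : ℝ, 0 < b → (inner ℝ (L w) (L (ψ b)) : ℝ) = 0 := by
    intro b hb
    have hd : HasDerivAt (fun t => (inner ℝ w (ψ t) : ℝ))
        (inner ℝ w (-(L.adjoint (L (ψ b)))) : ℝ) b := by
      have := (hasDerivAt_const b w).inner ℝ (hψ b hb.le)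
      simpa using this
    have hconst : HasDerivAt (fun t => (inner ℝ w (ψ t) : ℝ)) 0 b := by
      have hev : (fun t => (inner ℝ w (ψ t) : ℝ)) =ᶠ[𝓝 b] fun _ => c := by
        filter_upwards [eventually_gt_nhds hb] with t ht
        exact hwb t ht.le
      exact (hasDerivAt_const b c).congr_of_eventuallyEq hev
    have := hd.unique hconst
    rw [inner_neg_right, ContinuousLinearMap.adjoint_inner_right, neg_eq_zero] at this
    exact this
  -- L w = 0 by taking b → ∞
  have hLw0 : L w = 0 := by
    have h1 : Tendsto (fun b => (inner ℝ (L w) (L (ψ b)) : ℝ)) atTop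
        (𝓝 (inner ℝ (L w) (L w))) := by
      exact ((continuous_inner.comp (Continuous.prodMk continuous_const
        (L.continuous))).tendsto w).comp hw
    have h2 : (fun b => (inner ℝ (L w) (L (ψ b)) : ℝ)) =ᶠ[atTop] fun _ => 0 := by
      filter_upwards [eventually_gt_atTop (0:ℝ)] with b hb
      exact hLw b hb
    have := tendsto_nhds_unique (h1.congr' h2) tendsto_const_nhds
    exact inner_self_eq_zero.1 this
  have hw0 : w = 0 := hL (by rw [hLw0, map_zero])
  rw [hw0] at hw
  have : Tendsto (fun t => ψ t + φbar) atTop (𝓝 (0 + φbar)) :=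
    hw.add_const φbar
  simpa [hψdef] using this
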